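/- A simplicial subset of a regular simplicial set is regular. -/

import Mathlib

open CategoryTheory GrothendieckTopology Simplicial Opposite Limits

namespace SSet

/-- Naturality of the Yoneda bijection for simplicial sets. -/
lemma yonedaEquiv_symm_naturality' {m n : SimplexCategory} (f : m ⟶ n) (X : SSet)
    (y : X.obj (op n)) :
    SSet.stdSimplex.map f ≫ (yonedaEquiv (X := X) (n := n)).symm y = (yonedaEquiv (X := X) (n := m)).symm (X.map f.op y) := by
  ext k x
  show X.map (x.down ≫ f).op y = X.map x.down.op (X.map f.op y)
  rw [op_comp, FunctorToTypes.map_comp_apply]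

variable (X : SSet)

/-- A simplex is degenerate if it is the image of a simplex of strictly lower degree
under a simplicial operator. -/
def Degenerate {n : ℕ} (y : X _⦋n⦌) : Prop :=
  ∃ (m : ℕ) (σ : (⦋n⦌ : SimplexCategory) ⟶ ⦋m⦌) (z : X _⦋m⦌), m < n ∧ y = X.map σ.op z

/-- A simplex is non-degenerate if it is not degenerate. -/
def Nondegenerate {n : ℕ} (y : X _⦋n⦌) : Prop := ¬ X.Degenerate y

/-- The representing map `Δ[n] ⟶ X` of the `(n+1)`-st face `y ∘ δₙ₊₁` of an
`(n+1)`-simplex `y` of `X`. -/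
noncomputable def lastFaceMap {n : ℕ} (y : X _⦋n+1⦌) : Δ[n] ⟶ X :=
  (yonedaEquiv (X := X) (n := ⦋n⦌)).symm (X.map (SimplexCategory.δ (Fin.last (n+1))).op y)

/-- The canonical map `Δ[n+1] ⊔_{Δ[n]} Y' ⟶ X`, where `Y'` is the simplicial subset of `X`
generated by the last face of `y` (i.e. the image of the representing map of that face). -/
noncomputable def regularityMap {n : ℕ} (y : X _⦋n+1⦌) :
    pushout (SSet.stdSimplex.{u_1}.map (SimplexCategory.δ (Fin.last (n+1))))
      (Subfunctor.toRange (X.lastFaceMap y)) ⟶ X :=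
  pushout.desc ((yonedaEquiv (X := X) (n := ⦋n+1⦌)).symm y) (Subfunctor.range (X.lastFaceMap y)).ι
    (by rw [yonedaEquiv_symm_naturality']; exact (Subfunctor.toRange_ι _).symm)

/-- A simplicial set is regular if, for each of its non-degenerate simplices `y`,
the canonical map from the pushout `Δ[n+1] ⊔_{Δ[n]} Y'` to `X` is degreewise injective. -/
def IsRegular : Prop :=
  ∀ (n : ℕ) (y : X _⦋n+1⦌), X.Nondegenerate y →
    ∀ (k : SimplexCategoryᵒᵖ), Function.Injective ((X.regularityMap y).app k)

end SSet

section Aux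

universe u

/-- The Yoneda bijection for simplicial sets is compatible with postcomposition. -/
lemma aux_yonedaEquiv_symm_comp {X Y : SSet.{u}} {n : SimplexCategory} (f : X ⟶ Y)
    (x : X.obj (op n)) :
    ((SSet.yonedaEquiv (X := X) (n := n))).symm x ≫ f = ((SSet.yonedaEquiv (X := Y) (n := n))).symm (f.app (op n) x) := by
  ext k t
  exact FunctorToTypes.naturality f t.down.op x

variable {X : SSet.{u}} {A : Subfunctor (X : SimplexCategoryᵒᵖ ⥤ Type u)}

/-- The first component of `pushout.inl ≫ regularityMap`. -/
lemma aux_regularityMap_inl (X : SSet.{u}) {n : ℕ} (y : X _⦋n+1⦌) :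
    pushout.inl _ _ ≫ X.regularityMap y = ((SSet.yonedaEquiv (X := X) (n := ⦋n+1⦌))).symm y :=
  pushout.inl_desc _ _ _

/-- A simplex of a simplicial subset that is degenerate in the ambient simplicial set is
degenerate in the subset. -/
lemma aux_nondeg {n : ℕ} (y : A.toFunctor.obj (op ⦋n⦌))
    (h : X.Degenerate y.1) : SSet.Degenerate A.toFunctor y := by
  obtain ⟨m, σ, z, hm, hz⟩ := h
  have hle : (image σ).len ≤ m :=
    SimplexCategory.len_le_of_mono (image.ι σ)
  haveI : IsSplitEpi (factorThruImage σ) := isSplitEpi_of_epi _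
  have ht : section_ (factorThruImage σ) ≫ factorThruImage σ = 𝟙 (image σ) :=
    IsSplitEpi.id _
  have hw : y.1 = X.map (factorThruImage σ).op (X.map (image.ι σ).op z) := by
    rw [hz, ← FunctorToTypes.map_comp_apply, ← op_comp, image.fac]
  have hval : X.map (section_ (factorThruImage σ)).op y.1 = X.map (image.ι σ).op z := by
    rw [hw, ← FunctorToTypes.map_comp_apply, ← op_comp, ht, op_id, FunctorToTypes.map_id_apply]
  have hmem : X.map (image.ι σ).op z ∈ A.obj (op (image σ)) := by
    rw [← hval]
    exact A.map (section_ (factorThruImage σ)).op y.2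
  let h1 : (⦋(image σ).len⦌ : SimplexCategory) ⟶ image σ :=
    eqToHom (SimplexCategory.mk_len (image σ))
  refine ⟨(image σ).len, factorThruImage σ ≫ eqToHom (SimplexCategory.mk_len (image σ)).symm,
    ⟨X.map h1.op (X.map (image.ι σ).op z), A.map h1.op hmem⟩, lt_of_le_of_lt hle hm, ?_⟩
  apply Subtype.ext
  show y.1 = X.map (factorThruImage σ ≫ eqToHom (SimplexCategory.mk_len (image σ)).symm).op
    (X.map h1.op (X.map (image.ι σ).op z))
  rw [← FunctorToTypes.map_comp_apply, ← op_comp, Category.assoc, eqToHom_trans,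
    eqToHom_refl, Category.comp_id, hw]

/-- The representing map of the last face computed in a simplicial subset is compatible with
the one computed in the ambient simplicial set. -/
lemma aux_lastFace {n : ℕ} (y : A.toFunctor.obj (op ⦋n+1⦌)) :
    SSet.lastFaceMap A.toFunctor y ≫ A.ι = X.lastFaceMap y.1 := by
  unfold SSet.lastFaceMap
  rw [aux_yonedaEquiv_symm_comp]
  rfl

/-- The canonical isomorphism-like comparison from the image of the last face map in the
ambient simplicial set to the image of the last face map in the simplicial subset. -/
def auxJ {n : ℕ} (y : A.toFunctor.obj (op ⦋n+1⦌)) :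
    (Subfunctor.range (X.lastFaceMap y.1)).toFunctor ⟶
      (Subfunctor.range (SSet.lastFaceMap A.toFunctor y)).toFunctor where
  app U := TypeCat.ofHom fun x =>
    ⟨⟨x.1, by
      obtain ⟨t, ht⟩ := x.2
      rw [← ht, ← aux_lastFace (A := A) y]
      exact ((SSet.lastFaceMap A.toFunctor y).app U t).2⟩, by
      obtain ⟨t, ht⟩ := x.2
      exact ⟨t, Subtype.ext (by rw [← ht, ← aux_lastFace (A := A) y]; rfl)⟩⟩
  naturality U V f := by
    ext x
    exact Subtype.ext (Subtype.ext rfl)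

lemma auxJ_comm {n : ℕ} (y : A.toFunctor.obj (op ⦋n+1⦌)) :
    Subfunctor.toRange (X.lastFaceMap y.1) ≫ auxJ y
      = Subfunctor.toRange (SSet.lastFaceMap A.toFunctor y) := by
  ext U x
  refine Subtype.ext (Subtype.ext ?_)
  show (X.lastFaceMap y.1).app U x = ((SSet.lastFaceMap A.toFunctor y).app U x).1
  rw [← aux_lastFace (A := A) y]
  rfl

/-- The comparison map between the two pushouts. -/
noncomputable def auxD {n : ℕ} (y : A.toFunctor.obj (op ⦋n+1⦌)) :
    pushout (SSet.stdSimplex.map (SimplexCategory.δ (Fin.last (n+1))))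
      (Subfunctor.toRange (X.lastFaceMap y.1)) ⟶
    pushout (SSet.stdSimplex.map (SimplexCategory.δ (Fin.last (n+1))))
      (Subfunctor.toRange (SSet.lastFaceMap A.toFunctor y)) :=
  pushout.desc (pushout.inl _ _) (auxJ y ≫ pushout.inr _ _) (by
    rw [← Category.assoc, auxJ_comm]
    exact pushout.condition)

lemma auxD_inl {n : ℕ} (y : A.toFunctor.obj (op ⦋n+1⦌)) :
    pushout.inl _ _ ≫ auxD (A := A) y = pushout.inl _ _ :=
  pushout.inl_desc _ _ _

end Aux

/-- A simplicial subset of a regular simplicial set is regular. -/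
theorem subcomplex_isRegular_of_isRegular (X : SSet)
    (A : Subfunctor (X : SimplexCategoryᵒᵖ ⥤ Type _)) (hX : X.IsRegular) :
    SSet.IsRegular A.toFunctor := by
  intro n y hy k p q hpq
  have hyX : X.Nondegenerate y.1 := fun h => hy (aux_nondeg y h)
  haveI hepi' : ∀ U, Epi ((Subfunctor.toRange (SSet.lastFaceMap A.toFunctor y)).app U) := by
    intro U
    rw [CategoryTheory.epi_iff_surjective]
    rintro ⟨x, t, ht⟩
    exact ⟨t, Subtype.ext ht⟩
  haveI hepi : Epi (Subfunctor.toRange (SSet.lastFaceMap A.toFunctor y)) :=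
    NatTrans.epi_of_epi_app _
  have hsurj : Function.Surjective
      ((pushout.inl (SSet.stdSimplex.map (SimplexCategory.δ (Fin.last (n+1))))
        (Subfunctor.toRange (SSet.lastFaceMap A.toFunctor y))).app k) :=
    (CategoryTheory.epi_iff_surjective _).1 inferInstance
  obtain ⟨s, rfl⟩ := hsurj p
  obtain ⟨s', rfl⟩ := hsurj q
  have e := fun t => ConcreteCategory.congr_hom (NatTrans.congr_app (aux_regularityMap_inl A.toFunctor y) k) t
  have hA : ((SSet.yonedaEquiv (X := A.toFunctor) (n := ⦋n+1⦌)).symm y).app k s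
      = ((SSet.yonedaEquiv (X := A.toFunctor) (n := ⦋n+1⦌)).symm y).app k s' :=
    (e s).symm.trans (hpq.trans (e s'))
  have f := fun t => ConcreteCategory.congr_hom (NatTrans.congr_app (aux_yonedaEquiv_symm_comp A.ι y) k) t
  have hXeq : (((SSet.yonedaEquiv (X := X) (n := ⦋n+1⦌))).symm (A.ι.app (op ⦋n+1⦌) y)).app k s
      = (((SSet.yonedaEquiv (X := X) (n := ⦋n+1⦌))).symm (A.ι.app (op ⦋n+1⦌) y)).app k s' :=
    (f s).symm.trans ((congrArg (A.ι.app k) hA).trans (f s'))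
  have eX := fun t => ConcreteCategory.congr_hom (NatTrans.congr_app (aux_regularityMap_inl X y.1) k) t
  have hinlX : (pushout.inl (SSet.stdSimplex.map (SimplexCategory.δ (Fin.last (n+1))))
        (Subfunctor.toRange (X.lastFaceMap y.1))).app k s
      = (pushout.inl (SSet.stdSimplex.map (SimplexCategory.δ (Fin.last (n+1))))
        (Subfunctor.toRange (X.lastFaceMap y.1))).app k s' :=
    hX n y.1 hyX k ((eX s).trans (hXeq.trans (eX s').symm))
  have hd := fun t => ConcreteCategory.congr_hom (NatTrans.congr_app (auxD_inl (A := A) y) k) t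
  exact (hd s).symm.trans ((congrArg ((auxD (A := A) y).app k) hinlX).trans (hd s'))
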